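/- Let G be a k-vertex-critical graph and let U, W be non-empty disjoint vertex subsets. Let H := (G - U)_{k-1} be the (k-1)-hull of G - U. If φ : G[U] → H[W] is a graph homomorphism, then there exists u ∈ U such that N_G(u) \ U is not contained in N_H(φ(u)). -/

import Mathlib

/-- `G` is `k`-vertex-critical. -/
def IsVertexCritical {V : Type*} (G : SimpleGraph V) (k : ℕ) : Prop :=
  G.chromaticNumber = k ∧ ∀ v : V, (G.induce ({v}ᶜ : Set V)).Colorable (k - 1)

/-- The `m`-hull of `G - U`, as a graph on `V`: vertices `u`, `v` outside `U` are
adjacent iff every proper `m`-coloring of `G - U` gives them different colors. -/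
def hullDel {V : Type*} (G : SimpleGraph V) (U : Set V) (m : ℕ) : SimpleGraph V where
  Adj u v := u ≠ v ∧ u ∉ U ∧ v ∉ U ∧
    ∀ c : V → Fin m, (∀ a b, a ∉ U → b ∉ U → G.Adj a b → c a ≠ c b) → c u ≠ c v
  symm := ⟨fun u v h => ⟨h.1.symm, h.2.2.1, h.2.1, fun c hc => (h.2.2.2 c hc).symm⟩⟩
  loopless := ⟨fun u h => h.1 rfl⟩

/-- Color trick: if `G` is `k`-vertex-critical, `U`, `W` nonempty disjoint vertex sets,
`H := (G - U)_{k-1}`, and `φ` is a homomorphism from `G[U]` to `H[W]`, then some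
`u ∈ U` has `N_G(u) \ U ⊄ N_H(φ u)`. -/
theorem color_trick {V : Type*} [Fintype V] (G : SimpleGraph V) (k : ℕ)
    (hG : IsVertexCritical G k) (U W : Set V)
    (hU : U.Nonempty) (hW : W.Nonempty) (hUW : Disjoint U W)
    (φ : V → V) (hφW : ∀ u ∈ U, φ u ∈ W)
    (hφhom : ∀ u ∈ U, ∀ u' ∈ U, G.Adj u u' → (hullDel G U (k - 1)).Adj (φ u) (φ u')) :
    ∃ u ∈ U, ¬ (G.neighborSet u \ U ⊆ (hullDel G U (k - 1)).neighborSet (φ u)) := by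
  classical
  by_contra hcon
  push_neg at hcon
  obtain ⟨v, hv⟩ := hU
  obtain ⟨C⟩ := hG.2 v
  have hψ : ∀ x : V, (if x ∈ U then φ x else x) ∈ ({v}ᶜ : Set V) := by
    intro x
    by_cases hx : x ∈ U
    · simp only [hx, if_true, Set.mem_compl_iff, Set.mem_singleton_iff]
      intro h
      exact (hUW.ne_of_mem hv (hφW x hx)) h.symm
    · simp only [hx, if_false, Set.mem_compl_iff, Set.mem_singleton_iff]
      intro h
      exact hx (h ▸ hv)
  set c : V → Fin (k - 1) := fun x => C ⟨if x ∈ U then φ x else x, hψ x⟩ with hc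
  have hout : ∀ a b, a ∉ U → b ∉ U → G.Adj a b → c a ≠ c b := by
    intro a b ha hb hab
    simp only [hc, ha, hb, if_false]
    exact C.valid hab
  have hcU : ∀ u, u ∈ U → c u = c (φ u) := by
    intro u hu
    have h1 : φ u ∉ U := fun h => hUW.ne_of_mem h (hφW u hu) rfl
    simp only [hc, hu, h1, if_true, if_false]
  have valid : ∀ a b, G.Adj a b → c a ≠ c b := by
    intro a b hab
    by_cases ha : a ∈ U <;> by_cases hb : b ∈ U
    · have hH := hφhom a ha b hb hab
      rw [hcU a ha, hcU b hb]
      exact hH.2.2.2 c hout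
    · have hmem : b ∈ G.neighborSet a \ U := ⟨hab, hb⟩
      have hH : (hullDel G U (k - 1)).Adj (φ a) b := hcon a ha hmem
      rw [hcU a ha]
      exact hH.2.2.2 c hout
    · have hmem : a ∈ G.neighborSet b \ U := ⟨hab.symm, ha⟩
      have hH : (hullDel G U (k - 1)).Adj (φ b) a := hcon b hb hmem
      rw [hcU b hb]
      exact fun h => hH.2.2.2 c hout h.symm
    · exact hout a b ha hb hab
  have hcol : G.Colorable (k - 1) := ⟨SimpleGraph.Coloring.mk c fun {a b} h => valid a b h⟩
  rcases Nat.eq_zero_or_pos k with hk | hk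
  · have he : IsEmpty (Fin (k - 1)) := by rw [hk]; exact Fin.isEmpty'
    exact he.false (c v)
  · have h1 := hcol.chromaticNumber_le
    rw [hG.1] at h1
    have h2 : k ≤ k - 1 := by exact_mod_cast h1
    omega
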